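/- Fix points x₁,…,x_m and let H₁,…,H_r be classes of real-valued functions each uniformly bounded by A > 0 on x₁,…,x_m. Then the empirical Rademacher complexity of their union satisfies R̂_m(H₁ ∪ ⋯ ∪ H_r) ≤ max_{1≤i≤r} R̂_m(H_i) + 2√2 · A · √(log r)/√m. -/

import Mathlib

/-- A Rademacher sign from a boolean. -/
def sgn (b : Bool) : ℝ := if b then 1 else -1

/-- Expectation over `ε` uniform on `{-1,+1}^m` (encoded as `Fin m → Bool`). -/
noncomputable def EB (m : ℕ) (f : (Fin m → Bool) → ℝ) : ℝ := (∑ ε, f ε) / 2 ^ m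

/-- Empirical Rademacher complexity of a class `H` on data `x₁,…,x_m`. -/
noncomputable def rademacher {α : Type*} (m : ℕ) (x : Fin m → α) (H : Set (α → ℝ)) : ℝ :=
  EB m (fun ε => sSup ((fun h => (1 / (m:ℝ)) * ∑ i, sgn (ε i) * h (x i)) '' H))

/-- Empirical Rademacher complexity with absolute value inside the supremum. -/
noncomputable def radAbs {α : Type*} (m : ℕ) (x : Fin m → α) (H : Set (α → ℝ)) : ℝ :=
  EB m (fun ε => sSup ((fun h => (1 / (m:ℝ)) * |∑ i, sgn (ε i) * h (x i)|) '' H))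

/-! ### Auxiliary lemmas -/

section Aux

lemma sgn_abs (b : Bool) : |sgn b| = 1 := by
  unfold sgn; cases b <;> simp

lemma card_cube (m : ℕ) : Fintype.card (Fin m → Bool) = 2 ^ m := by
  simp [Fintype.card_fun]

lemma EB_mono {m : ℕ} {f g : (Fin m → Bool) → ℝ} (h : ∀ ε, f ε ≤ g ε) :
    EB m f ≤ EB m g := by
  unfold EB
  gcongr with ε _
  exact h ε

lemma EB_add {m : ℕ} (f g : (Fin m → Bool) → ℝ) :
    EB m (fun ε => f ε + g ε) = EB m f + EB m g := by
  unfold EB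
  rw [Finset.sum_add_distrib, add_div]

lemma EB_const {m : ℕ} (c : ℝ) : EB m (fun _ => c) = c := by
  unfold EB
  rw [Finset.sum_const, Finset.card_univ, nsmul_eq_mul]
  rw [show ((Fintype.card (Fin m → Bool) : ℝ)) = 2 ^ m by rw [card_cube]; push_cast; ring]
  field_simp

lemma EB_smul {m : ℕ} (c : ℝ) (f : (Fin m → Bool) → ℝ) :
    EB m (fun ε => c * f ε) = c * EB m f := by
  unfold EB
  rw [← Finset.mul_sum, mul_div_assoc]

lemma EB_sum {m r : ℕ} (g : Fin r → (Fin m → Bool) → ℝ) :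
    EB m (fun ε => ∑ i, g i ε) = ∑ i, EB m (g i) := by
  unfold EB
  rw [Finset.sum_comm, Finset.sum_div]

lemma exp_EB_le (m : ℕ) (f : (Fin m → Bool) → ℝ) :
    Real.exp (EB m f) ≤ EB m (fun ε => Real.exp (f ε)) := by
  have hcard : ((Fintype.card (Fin m → Bool) : ℝ)) = 2 ^ m := by
    rw [card_cube]; push_cast; ring
  have h := convexOn_exp.map_sum_le (t := Finset.univ)
    (w := fun _ : Fin m → Bool => ((2:ℝ) ^ m)⁻¹) (p := f)
    (fun i _ => by positivity)
    (by rw [Finset.sum_const, Finset.card_univ, nsmul_eq_mul, hcard]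
        field_simp)
    (fun i _ => Set.mem_univ _)
  simp only [smul_eq_mul] at h
  calc Real.exp (EB m f) = Real.exp (∑ ε, ((2:ℝ)^m)⁻¹ * f ε) := by
        rw [← Finset.mul_sum]; unfold EB; rw [inv_mul_eq_div]
    _ ≤ ∑ ε, ((2:ℝ)^m)⁻¹ * Real.exp (f ε) := h
    _ = EB m (fun ε => Real.exp (f ε)) := by
        rw [← Finset.mul_sum]; unfold EB; rw [inv_mul_eq_div]

lemma EB_succ (n : ℕ) (f : (Fin (n+1) → Bool) → ℝ) :
    EB (n+1) f = EB n (fun ε => (f (Fin.cons true ε) + f (Fin.cons false ε)) / 2) := by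
  unfold EB
  rw [← Equiv.sum_comp (Fin.consEquiv (fun _ => Bool)) f]
  rw [Fintype.sum_prod_type]
  rw [Fintype.sum_bool]
  rw [← Finset.sum_add_distrib, ← Finset.sum_div]
  rw [pow_succ]
  field_simp
  ring_nf
  simp [Fin.consEquiv]

lemma half_exp_add_le {a b c : ℝ} (h : |a - b| ≤ c) :
    (Real.exp a + Real.exp b) / 2 ≤ Real.exp ((a + b) / 2 + c ^ 2 / 8) := by
  have key : (Real.exp a + Real.exp b) / 2
      = Real.exp ((a + b) / 2) * Real.cosh ((a - b) / 2) := by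
    rw [Real.cosh_eq]
    rw [show Real.exp ((a+b)/2) * ((Real.exp ((a-b)/2) + Real.exp (-((a-b)/2)))/2)
        = (Real.exp ((a+b)/2) * Real.exp ((a-b)/2)
           + Real.exp ((a+b)/2) * Real.exp (-((a-b)/2))) / 2 by ring]
    rw [← Real.exp_add, ← Real.exp_add]
    have e1 : (a + b) / 2 + (a - b) / 2 = a := by ring
    have e2 : (a + b) / 2 + -((a - b) / 2) = b := by ring
    rw [e1, e2]
  rw [key, Real.exp_add]
  have h1 : Real.cosh ((a - b) / 2) ≤ Real.exp (c ^ 2 / 8) := by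
    calc Real.cosh ((a - b) / 2) ≤ Real.exp (((a - b) / 2) ^ 2 / 2) :=
          Real.cosh_le_exp_half_sq _
      _ ≤ Real.exp (c ^ 2 / 8) := by
          rw [Real.exp_le_exp]
          have : (a - b) ^ 2 ≤ c ^ 2 := by
            rw [← sq_abs]
            exact pow_le_pow_left₀ (abs_nonneg _) h 2
          nlinarith
  have h2 : (0:ℝ) < Real.exp ((a + b) / 2) := Real.exp_pos _
  nlinarith [Real.cosh_pos ((a-b)/2)]

/-- Hoeffding-type MGF bound on the boolean cube (bounded differences). -/
lemma mgf_bound : ∀ (n : ℕ) (c : ℝ), 0 ≤ c → ∀ (f : (Fin n → Bool) → ℝ),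
    (∀ ε j b, |f ε - f (Function.update ε j b)| ≤ c) →
    EB n (fun ε => Real.exp (f ε)) ≤ Real.exp (EB n f + n * c ^ 2 / 8) := by
  intro n
  induction n with
  | zero =>
      intro c hc f hf
      have : ∀ g : (Fin 0 → Bool) → ℝ, EB 0 g = g default := by
        intro g
        unfold EB
        rw [Fintype.sum_unique]
        simp
        exact congrArg g (Subsingleton.elim _ _)
      rw [this, this]
      simp
  | succ n ih =>
      intro c hc f hf
      set g : (Fin n → Bool) → ℝ :=
        fun ε => (f (Fin.cons true ε) + f (Fin.cons false ε)) / 2 with hg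
      have hgosc : ∀ ε j b, |g ε - g (Function.update ε j b)| ≤ c := by
        intro ε j b
        have h1 := hf (Fin.cons true ε) j.succ b
        have h2 := hf (Fin.cons false ε) j.succ b
        rw [← Fin.cons_update] at h1 h2
        have : g ε - g (Function.update ε j b)
            = ((f (Fin.cons true ε) - f (Fin.cons true (Function.update ε j b)))
              + (f (Fin.cons false ε) - f (Fin.cons false (Function.update ε j b)))) / 2 := by
          rw [hg]; ring
        rw [this]
        calc |_ / 2| ≤ (|f (Fin.cons true ε) - f (Fin.cons true (Function.update ε j b))|
              + |f (Fin.cons false ε) - f (Fin.cons false (Function.update ε j b))|) / 2 := by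
              rw [abs_div]
              simp only [abs_two]
              gcongr
              exact abs_add_le _ _
          _ ≤ (c + c) / 2 := by gcongr
          _ = c := by ring
      have hosc0 : ∀ ε : Fin n → Bool,
          |f (Fin.cons true ε) - f (Fin.cons false ε)| ≤ c := by
        intro ε
        have := hf (Fin.cons true ε) 0 false
        rwa [Fin.update_cons_zero] at this
      calc EB (n+1) (fun ε => Real.exp (f ε))
          = EB n (fun ε => (Real.exp (f (Fin.cons true ε)) + Real.exp (f (Fin.cons false ε))) / 2) :=
            EB_succ n _
        _ ≤ EB n (fun ε => Real.exp (g ε + c ^ 2 / 8)) := by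
            apply EB_mono
            intro ε
            exact half_exp_add_le (hosc0 ε)
        _ = Real.exp (c ^ 2 / 8) * EB n (fun ε => Real.exp (g ε)) := by
            rw [← EB_smul]
            congr 1
            ext ε
            rw [Real.exp_add]
            ring
        _ ≤ Real.exp (c ^ 2 / 8) * Real.exp (EB n g + n * c ^ 2 / 8) := by
            have := ih c hc g hgosc
            gcongr
        _ = Real.exp (EB n g + (n+1 : ℕ) * c ^ 2 / 8) := by
            rw [← Real.exp_add]
            congr 1
            push_cast
            ring
        _ = Real.exp (EB (n+1) f + (n+1 : ℕ) * c ^ 2 / 8) := by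
            rw [← EB_succ]

end Aux

/-- Rademacher complexity of a union of uniformly bounded classes. -/
theorem rad_union {α : Type*} (m r : ℕ) (hm : 0 < m) (hr : 0 < r) (x : Fin m → α)
    (H : Fin r → Set (α → ℝ)) (A : ℝ) (hA : 0 < A)
    (hbdd : ∀ i, ∀ h ∈ H i, ∀ j, |h (x j)| ≤ A) :
    radAbs m x (⋃ i, H i) ≤
      (⨆ i, radAbs m x (H i)) +
        2 * Real.sqrt 2 * A * Real.sqrt (Real.log r) / Real.sqrt m := by
  have hm' : (0:ℝ) < m := by exact_mod_cast hm
  haveI : Nonempty (Fin r) := ⟨⟨0, hr⟩⟩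
  -- the summand
  set S : (Fin m → Bool) → (α → ℝ) → ℝ :=
    fun ε h => (1 / (m:ℝ)) * |∑ i, sgn (ε i) * h (x i)| with hS
  -- Z i ε : the sup over class i
  set Z : Fin r → (Fin m → Bool) → ℝ := fun i ε => sSup (S ε '' H i) with hZ
  -- basic bound on summands
  have hSbd : ∀ (i) (h) (_ : h ∈ H i) (ε), S ε h ≤ A := by
    intro i h hh ε
    have habs : |∑ j, sgn (ε j) * h (x j)| ≤ (m:ℝ) * A := by
      calc |∑ j, sgn (ε j) * h (x j)| ≤ ∑ j, |sgn (ε j) * h (x j)| :=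
            Finset.abs_sum_le_sum_abs _ _
        _ ≤ ∑ _j : Fin m, A := by
            apply Finset.sum_le_sum
            intro j _
            rw [abs_mul, sgn_abs, one_mul]
            exact hbdd i h hh j
        _ = (m:ℝ) * A := by rw [Finset.sum_const, Finset.card_univ, Fintype.card_fin,
              nsmul_eq_mul]
    calc S ε h = (1 / (m:ℝ)) * |∑ j, sgn (ε j) * h (x j)| := rfl
      _ ≤ (1 / (m:ℝ)) * ((m:ℝ) * A) := by gcongr
      _ = A := by field_simp
  have hSnonneg : ∀ (ε) (h), 0 ≤ S ε h := by
    intro ε h; rw [hS]; positivity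
  have hbddAbove : ∀ i ε, BddAbove (S ε '' H i) := by
    intro i ε
    exact ⟨A, by rintro y ⟨h, hh, rfl⟩; exact hSbd i h hh ε⟩
  have hZnonneg : ∀ i ε, 0 ≤ Z i ε := by
    intro i ε
    exact Real.sSup_nonneg (by rintro y ⟨h, hh, rfl⟩; exact hSnonneg ε h)
  have hZbd : ∀ i ε, Z i ε ≤ A := by
    intro i ε
    exact Real.sSup_le (by rintro y ⟨h, hh, rfl⟩; exact hSbd i h hh ε) hA.le
  -- one-sided oscillation
  have hosc1 : ∀ (i) (ε : Fin m → Bool) (j : Fin m) (b : Bool),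
      Z i ε ≤ Z i (Function.update ε j b) + 2 * A / m := by
    intro i ε j b
    apply Real.sSup_le
    · rintro y ⟨h, hh, rfl⟩
      have hdiff : ∑ k, sgn (ε k) * h (x k) - ∑ k, sgn (Function.update ε j b k) * h (x k)
          = (sgn (ε j) - sgn (Function.update ε j b j)) * h (x j) := by
        rw [← Finset.sum_sub_distrib]
        rw [Finset.sum_eq_single j]
        · ring
        · intro k _ hk
          rw [Function.update_of_ne hk]
          ring
        · intro hj; exact absurd (Finset.mem_univ j) hj
      have hsd : |sgn (ε j) - sgn (Function.update ε j b j)| ≤ 2 := by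
        have := sgn_abs (ε j)
        have := sgn_abs (Function.update ε j b j)
        calc |sgn (ε j) - sgn (Function.update ε j b j)|
            ≤ |sgn (ε j)| + |sgn (Function.update ε j b j)| := abs_sub _ _
          _ ≤ 2 := by rw [sgn_abs, sgn_abs]; norm_num
      have habs : |∑ k, sgn (ε k) * h (x k)|
          ≤ |∑ k, sgn (Function.update ε j b k) * h (x k)| + 2 * A := by
        calc |∑ k, sgn (ε k) * h (x k)|
            = |∑ k, sgn (Function.update ε j b k) * h (x k)
              + (sgn (ε j) - sgn (Function.update ε j b j)) * h (x j)| := by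
              rw [← hdiff]; ring_nf
          _ ≤ |∑ k, sgn (Function.update ε j b k) * h (x k)|
              + |(sgn (ε j) - sgn (Function.update ε j b j)) * h (x j)| := abs_add_le _ _
          _ ≤ |∑ k, sgn (Function.update ε j b k) * h (x k)| + 2 * A := by
              gcongr
              rw [abs_mul]
              exact mul_le_mul hsd (hbdd i h hh j) (abs_nonneg _) (by norm_num)
      calc S ε h = (1 / (m:ℝ)) * |∑ k, sgn (ε k) * h (x k)| := rfl
        _ ≤ (1 / (m:ℝ)) * (|∑ k, sgn (Function.update ε j b k) * h (x k)| + 2 * A) := by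
            gcongr
        _ = S (Function.update ε j b) h + 2 * A / m := by rw [hS]; field_simp
        _ ≤ Z i (Function.update ε j b) + 2 * A / m := by
            gcongr
            exact le_csSup (hbddAbove i _) ⟨h, hh, rfl⟩
    · have h1 := hZnonneg i (Function.update ε j b)
      have h2 : (0:ℝ) < 2 * A / m := by positivity
      linarith
  have hosc : ∀ (i) (ε : Fin m → Bool) (j : Fin m) (b : Bool),
      |Z i ε - Z i (Function.update ε j b)| ≤ 2 * A / m := by
    intro i ε j b
    rw [abs_le]
    constructor
    · have h2 := hosc1 i (Function.update ε j b) j (ε j)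
      rw [Function.update_idem, Function.update_eq_self] at h2
      linarith
    · have h1 := hosc1 i ε j b
      linarith
  -- the supremum over the union is at most the max of the class sups
  set M : (Fin m → Bool) → ℝ := fun ε => ⨆ i, Z i ε with hM
  have step1 : radAbs m x (⋃ i, H i) ≤ EB m M := by
    apply EB_mono
    intro ε
    apply Real.sSup_le
    · rintro y ⟨h, hh, rfl⟩
      rw [Set.mem_iUnion] at hh
      obtain ⟨i, hi⟩ := hh
      calc S ε h ≤ Z i ε := le_csSup (hbddAbove i ε) ⟨h, hi, rfl⟩
        _ ≤ M ε := le_ciSup (f := fun i => Z i ε) (Set.finite_range _).bddAbove i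
    · exact Real.iSup_nonneg fun i => hZnonneg i ε
  -- means
  set μ : Fin r → ℝ := fun i => EB m (Z i) with hμ
  have hμeq : ∀ i, μ i = radAbs m x (H i) := fun i => rfl
  -- centered sup
  set D : (Fin m → Bool) → ℝ := fun ε => ⨆ i, (Z i ε - μ i) with hD
  set T : ℝ := EB m D with hT
  have step2 : EB m M ≤ (⨆ i, μ i) + T := by
    have : ∀ ε, M ε ≤ D ε + ⨆ i, μ i := by
      intro ε
      apply ciSup_le
      intro i
      have h1 : Z i ε - μ i ≤ D ε :=
        le_ciSup (f := fun i => Z i ε - μ i) (Set.finite_range _).bddAbove i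
      have h2 : μ i ≤ ⨆ i, μ i := le_ciSup (Set.finite_range _).bddAbove i
      linarith
    calc EB m M ≤ EB m (fun ε => D ε + ⨆ i, μ i) := EB_mono this
      _ = T + ⨆ i, μ i := by rw [EB_add, EB_const]
      _ = (⨆ i, μ i) + T := by ring
  -- bound on T
  have hTbound : T ≤ 2 * Real.sqrt 2 * A * Real.sqrt (Real.log r) / Real.sqrt m := by
    rcases eq_or_lt_of_le (Nat.one_le_iff_ne_zero.mpr hr.ne' : 1 ≤ r) with h1 | h1
    · -- r = 1
      have hr1 : r = 1 := h1.symm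
      subst hr1
      have hDone : D = fun ε => Z 0 ε - μ 0 := by
        funext ε
        have h0 : D ε = (fun i : Fin 1 => Z i ε - μ i) default := ciSup_unique
        simpa using h0
      rw [hT, hDone]
      have : EB m (fun ε => Z 0 ε - μ 0) = 0 := by
        have := EB_add (m := m) (Z 0) (fun _ => -μ 0)
        simp only [sub_eq_add_neg]
        rw [show (fun ε => Z 0 ε + -μ 0) = (fun ε => Z 0 ε + (fun _ : Fin m → Bool => -μ 0) ε) from rfl]
        rw [EB_add, EB_const]
        simp [hμ]
      rw [this]
      have : Real.log 1 = 0 := Real.log_one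
      simp only [Nat.cast_one, this, Real.sqrt_zero]
      simp
    · -- r ≥ 2
      have hL : 0 < Real.log r := by
        apply Real.log_pos
        exact_mod_cast h1
      set L : ℝ := Real.log r with hLdef
      set lam : ℝ := Real.sqrt (2 * m * L) / A with hlam
      have hlampos : 0 < lam := by
        apply div_pos _ hA
        apply Real.sqrt_pos.mpr
        positivity
      -- MGF bound for each class
      have hmgf : ∀ i, EB m (fun ε => Real.exp (lam * (Z i ε - μ i)))
          ≤ Real.exp (lam ^ 2 * A ^ 2 / (2 * m)) := by
        intro i
        have hosc' : ∀ ε j b, |lam * (Z i ε - μ i) - lam * (Z i (Function.update ε j b) - μ i)|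
            ≤ lam * (2 * A / m) := by
          intro ε j b
          rw [show lam * (Z i ε - μ i) - lam * (Z i (Function.update ε j b) - μ i)
              = lam * (Z i ε - Z i (Function.update ε j b)) by ring]
          rw [abs_mul, abs_of_pos hlampos]
          exact mul_le_mul_of_nonneg_left (hosc i ε j b) hlampos.le
        have hmean : EB m (fun ε => lam * (Z i ε - μ i)) = 0 := by
          rw [show (fun ε => lam * (Z i ε - μ i))
              = (fun ε => lam * Z i ε + (fun _ : Fin m → Bool => lam * (-μ i)) ε) by
                funext ε; ring]
          rw [EB_add, EB_smul, EB_const]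
          ring
        have := mgf_bound m (lam * (2 * A / m)) (by positivity)
          (fun ε => lam * (Z i ε - μ i)) hosc'
        rw [hmean] at this
        calc EB m (fun ε => Real.exp (lam * (Z i ε - μ i)))
            ≤ Real.exp (0 + m * (lam * (2 * A / m)) ^ 2 / 8) := this
          _ = Real.exp (lam ^ 2 * A ^ 2 / (2 * m)) := by
              congr 1
              field_simp
              ring
      -- Jensen + union bound
      have hexpT : Real.exp (lam * T) ≤ r * Real.exp (lam ^ 2 * A ^ 2 / (2 * m)) := by
        calc Real.exp (lam * T) = Real.exp (EB m (fun ε => lam * D ε)) := by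
              rw [EB_smul, hT]
          _ ≤ EB m (fun ε => Real.exp (lam * D ε)) := exp_EB_le m _
          _ ≤ EB m (fun ε => ∑ i, Real.exp (lam * (Z i ε - μ i))) := by
              apply EB_mono
              intro ε
              obtain ⟨i₀, hi₀⟩ := exists_eq_ciSup_of_finite (f := fun i => Z i ε - μ i)
              have hDe : D ε = Z i₀ ε - μ i₀ := hi₀.symm
              rw [show lam * D ε = lam * (Z i₀ ε - μ i₀) from by rw [hDe]]
              exact Finset.single_le_sum (f := fun i => Real.exp (lam * (Z i ε - μ i)))
                (fun i _ => (Real.exp_pos _).le) (Finset.mem_univ i₀)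
          _ = ∑ i, EB m (fun ε => Real.exp (lam * (Z i ε - μ i))) := EB_sum _
          _ ≤ ∑ _i : Fin r, Real.exp (lam ^ 2 * A ^ 2 / (2 * m)) :=
              Finset.sum_le_sum fun i _ => hmgf i
          _ = r * Real.exp (lam ^ 2 * A ^ 2 / (2 * m)) := by
              rw [Finset.sum_const, Finset.card_univ, Fintype.card_fin, nsmul_eq_mul]
      have hlog : lam * T ≤ L + lam ^ 2 * A ^ 2 / (2 * m) := by
        have hr0 : (0:ℝ) < r := by exact_mod_cast hr
        have := Real.log_le_log (Real.exp_pos _) hexpT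
        rw [Real.log_exp, Real.log_mul hr0.ne' (Real.exp_pos _).ne', Real.log_exp] at this
        exact this
      have hTle : T ≤ L / lam + lam * A ^ 2 / (2 * m) := by
        calc T = lam * T / lam := by field_simp
          _ ≤ (L + lam ^ 2 * A ^ 2 / (2 * m)) / lam := by gcongr
          _ = L / lam + lam * A ^ 2 / (2 * m) := by field_simp
      -- now compute
      obtain ⟨sq, hsqpos, hsq2, hsqdef⟩ :
          ∃ sq : ℝ, 0 < sq ∧ sq * sq = 2 * m * L ∧ sq = Real.sqrt (2 * m * L) :=
        ⟨_, Real.sqrt_pos.mpr (by positivity), Real.mul_self_sqrt (by positivity), rfl⟩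
      have hlam' : lam = sq / A := by rw [hlam, hsqdef]
      have t1 : L / lam = A * sq / (2 * m) := by
        rw [hlam', div_div_eq_mul_div, div_eq_div_iff hsqpos.ne' (by positivity : (0:ℝ) < 2 * m).ne']
        linear_combination (-A) * hsq2
      have t2 : lam * A ^ 2 / (2 * m) = A * sq / (2 * m) := by
        rw [hlam']
        field_simp
      have hTle2 : T ≤ A * sq / m := by
        rw [t1, t2] at hTle
        calc T ≤ A * sq / (2 * m) + A * sq / (2 * m) := hTle
          _ = A * sq / m := by field_simp; ring
      have hsm : sq = Real.sqrt 2 * Real.sqrt m * Real.sqrt L := by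
        rw [hsqdef, ← Real.sqrt_mul (by norm_num) (m:ℝ), ← Real.sqrt_mul (by positivity)]
      have hsqmpos : 0 < Real.sqrt m := Real.sqrt_pos.mpr hm'
      have hmsq : (m:ℝ) = Real.sqrt m * Real.sqrt m := (Real.mul_self_sqrt hm'.le).symm
      have hfinal : A * sq / m ≤ 2 * Real.sqrt 2 * A * Real.sqrt L / Real.sqrt m := by
        rw [hsm, div_le_div_iff₀ hm' hsqmpos]
        calc A * (Real.sqrt 2 * Real.sqrt m * Real.sqrt L) * Real.sqrt m
            = (Real.sqrt 2 * A * Real.sqrt L) * (Real.sqrt m * Real.sqrt m) := by ring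
          _ = (Real.sqrt 2 * A * Real.sqrt L) * m := by rw [← hmsq]
          _ ≤ (2 * Real.sqrt 2 * A * Real.sqrt L) * m := by
              have hnn : (0:ℝ) ≤ Real.sqrt 2 * A * Real.sqrt L := by positivity
              nlinarith [hm']
      exact hTle2.trans hfinal
  calc radAbs m x (⋃ i, H i) ≤ EB m M := step1
    _ ≤ (⨆ i, μ i) + T := step2
    _ ≤ (⨆ i, radAbs m x (H i)) + 2 * Real.sqrt 2 * A * Real.sqrt (Real.log r) / Real.sqrt m := by
        gcongr
        exact (Set.finite_range _).bddAbove
        exact le_of_eq (hμeq i)
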